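/- With B = A ⊗ E the tensor product of an associative algebra A with the exterior algebra E on k generators, there is the decomposition [B,[B,B]] = [A,[A,A]] ⊗ (E^0 ⊕ E^1) + A[A,A] ⊗ E_+^{≥2} + [A,A] ⊗ E_−^{≥3}, where the three summands intersect pairwise trivially. -/

import Mathlib

open TensorProduct

/-- The exterior (Grassmann) algebra over ℂ on `k` generators. -/
abbrev ExtAlg (k : ℕ) := ExteriorAlgebra ℂ (Fin k → ℂ)

/-- The degree-`i` graded component `E^i` of the exterior algebra. -/
noncomputable def Egrade (k i : ℕ) : Submodule ℂ (ExtAlg k) :=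
  LinearMap.range (ExteriorAlgebra.ι ℂ : (Fin k → ℂ) →ₗ[ℂ] ExtAlg k) ^ i

/-- `E_− = ⊕_{i odd} E^i`. -/
noncomputable def Eodd (k : ℕ) : Submodule ℂ (ExtAlg k) := ⨆ i ∈ {i : ℕ | Odd i}, Egrade k i

/-- `E_+^{≥2} = ⊕_{i even, i ≥ 2} E^i`. -/
noncomputable def EevenGe2 (k : ℕ) : Submodule ℂ (ExtAlg k) :=
  ⨆ i ∈ {i : ℕ | Even i ∧ 2 ≤ i}, Egrade k i

/-- `E_−^{≥3} = ⊕_{i odd, i ≥ 3} E^i`. -/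
noncomputable def EoddGe3 (k : ℕ) : Submodule ℂ (ExtAlg k) :=
  ⨆ i ∈ {i : ℕ | Odd i ∧ 3 ≤ i}, Egrade k i

/-- `E_+^{≥4} = ⊕_{i even, i ≥ 4} E^i`. -/
noncomputable def EevenGe4 (k : ℕ) : Submodule ℂ (ExtAlg k) :=
  ⨆ i ∈ {i : ℕ | Even i ∧ 4 ≤ i}, Egrade k i

/-- `[X,Y]`: the ℂ-span of all commutators `[x,y] = xy − yx`, `x ∈ X`, `y ∈ Y`. -/
noncomputable def commS {B : Type*} [Ring B] [Algebra ℂ B] (X Y : Submodule ℂ B) : Submodule ℂ B :=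
  Submodule.span ℂ {z | ∃ x ∈ X, ∃ y ∈ Y, z = x * y - y * x}

/-- `U ⊗ F`: the ℂ-span of the pure tensors `u ⊗ f`, `u ∈ U`, `f ∈ F`, inside `A ⊗ E`. -/
noncomputable def tenS {A : Type*} [Ring A] [Algebra ℂ A] {k : ℕ}
    (U : Submodule ℂ A) (F : Submodule ℂ (ExtAlg k)) : Submodule ℂ (A ⊗[ℂ] ExtAlg k) :=
  Submodule.span ℂ {z | ∃ u ∈ U, ∃ f ∈ F, z = u ⊗ₜ[ℂ] f}
lemma Egrade_mul {k i j : ℕ} {x y : ExtAlg k} (hx : x ∈ Egrade k i) (hy : y ∈ Egrade k j) :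
    x * y ∈ Egrade k (i + j) := by
  unfold Egrade at *
  rw [pow_add]
  exact Submodule.mul_mem_mul hx hy

lemma comm_base (m n : Fin k → ℂ) :
    (ExteriorAlgebra.ι ℂ m : ExtAlg k) * ExteriorAlgebra.ι ℂ n
      = -(ExteriorAlgebra.ι ℂ n * ExteriorAlgebra.ι ℂ m) :=
  eq_neg_of_add_eq_zero_left (ExteriorAlgebra.ι_add_mul_swap m n)

lemma comm_one {k j : ℕ} {v f : ExtAlg k}
    (hv : v ∈ LinearMap.range (ExteriorAlgebra.ι ℂ : (Fin k → ℂ) →ₗ[ℂ] ExtAlg k))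
    (hf : f ∈ Egrade k j) : v * f = ((-1 : ℂ) ^ j) • (f * v) := by
  obtain ⟨m, rfl⟩ := hv
  unfold Egrade at hf
  induction hf using Submodule.pow_induction_on_left' with
  | algebraMap r => rw [pow_zero, one_smul, Algebra.commutes]
  | add x y i hx hy ihx ihy => rw [mul_add, ihx, ihy, ← smul_add, add_mul]
  | mem_mul w hw i x hx ih =>
      obtain ⟨n, rfl⟩ := hw
      rw [← mul_assoc, comm_base, neg_mul, mul_assoc, ih, mul_smul_comm, ← mul_assoc,
        ← neg_smul, pow_succ]
      ring_nf

lemma comm_pow {k i j : ℕ} {e f : ExtAlg k} (he : e ∈ Egrade k i) (hf : f ∈ Egrade k j) :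
    e * f = ((-1 : ℂ) ^ (i * j)) • (f * e) := by
  unfold Egrade at he
  induction he using Submodule.pow_induction_on_left' with
  | algebraMap r => rw [Nat.zero_mul, pow_zero, one_smul, Algebra.commutes]
  | add x y i hx hy ihx ihy => rw [add_mul, ihx, ihy, ← smul_add, mul_add]
  | mem_mul v hv n x hx ih =>
      rw [mul_assoc, ih, mul_smul_comm, ← mul_assoc, comm_one hv hf, smul_mul_assoc,
        smul_smul, mul_assoc, ← pow_add]
      congr 2
      rw [Nat.succ_eq_add_one]
      ring

lemma comm_even {k i j : ℕ} {e f : ExtAlg k} (he : e ∈ Egrade k i) (hf : f ∈ Egrade k j)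
    (h : Even (i * j)) : e * f = f * e := by
  rw [comm_pow he hf, h.neg_one_pow, one_smul]

lemma comm_odd {k i j : ℕ} {e f : ExtAlg k} (he : e ∈ Egrade k i) (hf : f ∈ Egrade k j)
    (h : Odd (i * j)) : e * f = -(f * e) := by
  rw [comm_pow he hf, h.neg_one_pow, neg_one_smul]

noncomputable def projS (k : ℕ) (s : Set ℕ) : ExtAlg k →ₗ[ℂ] ExtAlg k :=
  letI : ∀ i : ℕ, Decidable (i ∈ s) := fun i => Classical.propDecidable _
  (DirectSum.toModule ℂ ℕ (ExtAlg k)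
      (fun i => if i ∈ s then (⋀[ℂ]^i (Fin k → ℂ)).subtype else 0)).comp
    (DirectSum.decomposeLinearEquiv (fun i : ℕ => ⋀[ℂ]^i (Fin k → ℂ))).toLinearMap

lemma projS_apply_of_mem {k : ℕ} {s : Set ℕ} {i : ℕ} (hs : i ∈ s) {x : ExtAlg k}
    (hx : x ∈ Egrade k i) : projS k s x = x := by
  have hx' : x ∈ (⋀[ℂ]^i (Fin k → ℂ) : Submodule ℂ (ExtAlg k)) := hx
  unfold projS
  simp only [LinearMap.comp_apply, LinearEquiv.coe_coe, DirectSum.decomposeLinearEquiv_apply]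
  rw [DirectSum.decompose_of_mem (fun i : ℕ => ⋀[ℂ]^i (Fin k → ℂ)) hx',
    ← DirectSum.lof_eq_of ℂ, DirectSum.toModule_lof, if_pos hs]
  rfl

lemma projS_apply_of_not_mem {k : ℕ} {s : Set ℕ} {i : ℕ} (hs : i ∉ s) {x : ExtAlg k}
    (hx : x ∈ Egrade k i) : projS k s x = 0 := by
  have hx' : x ∈ (⋀[ℂ]^i (Fin k → ℂ) : Submodule ℂ (ExtAlg k)) := hx
  unfold projS
  simp only [LinearMap.comp_apply, LinearEquiv.coe_coe, DirectSum.decomposeLinearEquiv_apply]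
  rw [DirectSum.decompose_of_mem (fun i : ℕ => ⋀[ℂ]^i (Fin k → ℂ)) hx',
    ← DirectSum.lof_eq_of ℂ, DirectSum.toModule_lof, if_neg hs]
  rfl


lemma tenS_inf_eq_bot {A : Type*} [Ring A] [Algebra ℂ A] {k : ℕ}
    (U V : Submodule ℂ A) (F G : Submodule ℂ (ExtAlg k)) (s : Set ℕ)
    (hF : ∀ x ∈ F, projS k s x = x) (hG : ∀ x ∈ G, projS k s x = 0) :
    tenS U F ⊓ tenS V G = ⊥ := by
  set π := LinearMap.lTensor A (projS k s) with hπ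
  have h1 : tenS U F ≤ LinearMap.eqLocus π LinearMap.id := by
    refine Submodule.span_le.2 ?_
    rintro _ ⟨u, _, f, hf, rfl⟩
    show π (u ⊗ₜ[ℂ] f) = LinearMap.id (u ⊗ₜ[ℂ] f)
    rw [hπ, LinearMap.lTensor_tmul, hF f hf, LinearMap.id_apply]
  have h2 : tenS V G ≤ LinearMap.ker π := by
    refine Submodule.span_le.2 ?_
    rintro _ ⟨u, _, f, hf, rfl⟩
    show u ⊗ₜ[ℂ] f ∈ LinearMap.ker π
    rw [LinearMap.mem_ker, hπ, LinearMap.lTensor_tmul, hG f hf, TensorProduct.tmul_zero]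
  rw [eq_bot_iff]
  rintro z ⟨hz1, hz2⟩
  have e1 : π z = z := h1 hz1
  have e2 : π z = 0 := h2 hz2
  simp only [Submodule.mem_bot]
  rw [← e1, e2]

lemma projS_eq_self_on_biSup {k : ℕ} {s t : Set ℕ} (hts : t ⊆ s) :
    ∀ x ∈ (⨆ i ∈ t, Egrade k i), projS k s x = x := by
  have : (⨆ i ∈ t, Egrade k i) ≤ LinearMap.eqLocus (projS k s) LinearMap.id := by
    refine iSup₂_le fun i hi => fun x hx => ?_
    show projS k s x = x
    exact projS_apply_of_mem (hts hi) hx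
  exact fun x hx => this hx

lemma projS_eq_zero_on_biSup {k : ℕ} {s t : Set ℕ} (hts : ∀ i ∈ t, i ∉ s) :
    ∀ x ∈ (⨆ i ∈ t, Egrade k i), projS k s x = 0 := by
  have : (⨆ i ∈ t, Egrade k i) ≤ LinearMap.ker (projS k s) := by
    refine iSup₂_le fun i hi => fun x hx => ?_
    simpa using projS_apply_of_not_mem (hts i hi) hx
  exact fun x hx => this hx

section CommLemmas
variable {C : Type*} [Ring C] [Algebra ℂ C]

lemma comm_mem (x y : C) : x * y - y * x ∈ (commS ⊤ ⊤ : Submodule ℂ C) :=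
  Submodule.subset_span ⟨x, trivial, y, trivial, rfl⟩

lemma dcomm_mem (x : C) {w : C} (hw : w ∈ (commS ⊤ ⊤ : Submodule ℂ C)) :
    x * w - w * x ∈ (commS ⊤ (commS ⊤ ⊤) : Submodule ℂ C) :=
  Submodule.subset_span ⟨x, trivial, w, hw, rfl⟩

lemma dcomm_le_comm : (commS ⊤ (commS ⊤ ⊤) : Submodule ℂ C) ≤ commS ⊤ ⊤ := by
  refine Submodule.span_le.2 ?_
  rintro _ ⟨x, -, w, -, rfl⟩
  exact comm_mem x w

lemma commS_le_ACA : (commS ⊤ ⊤ : Submodule ℂ C) ≤ ⊤ * commS ⊤ ⊤ := by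
  conv_lhs => rw [← one_mul (commS ⊤ ⊤ : Submodule ℂ C)]
  exact mul_le_mul' le_top le_rfl

lemma mul_comm_mem_ACA (x y z : C) :
    x * (y * z - z * y) ∈ (⊤ * commS ⊤ ⊤ : Submodule ℂ C) :=
  Submodule.mul_mem_mul Submodule.mem_top (comm_mem y z)

lemma comm_mul_mem_ACA (x y z : C) :
    (y * z - z * y) * x ∈ (⊤ * commS ⊤ ⊤ : Submodule ℂ C) := by
  have h : (y * z - z * y) * x = (y * (z * x) - (z * x) * y) - z * (y * x - x * y) := by
    noncomm_ring
  rw [h]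
  exact sub_mem (commS_le_ACA (comm_mem y (z * x)))
    (Submodule.mul_mem_mul Submodule.mem_top (comm_mem y x))

end CommLemmas

section TenLemmas
variable {A : Type*} [Ring A] [Algebra ℂ A] {k : ℕ}

lemma comm_tmul {w : A} (hw : w ∈ (commS ⊤ ⊤ : Submodule ℂ A)) (e : ExtAlg k) :
    w ⊗ₜ[ℂ] e ∈ (commS ⊤ ⊤ : Submodule ℂ (A ⊗[ℂ] ExtAlg k)) := by
  have hle : (commS ⊤ ⊤ : Submodule ℂ A) ≤ Submodule.comap
      ((TensorProduct.mk ℂ A (ExtAlg k)).flip e) (commS ⊤ ⊤) := by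
    refine Submodule.span_le.2 ?_
    rintro _ ⟨x, -, y, -, rfl⟩
    simp only [SetLike.mem_coe, Submodule.mem_comap, LinearMap.flip_apply,
      TensorProduct.mk_apply]
    have h : (x * y - y * x) ⊗ₜ[ℂ] e =
        (x ⊗ₜ[ℂ] (1 : ExtAlg k)) * (y ⊗ₜ[ℂ] e) - (y ⊗ₜ[ℂ] e) * (x ⊗ₜ[ℂ] (1 : ExtAlg k)) := by
      rw [Algebra.TensorProduct.tmul_mul_tmul, Algebra.TensorProduct.tmul_mul_tmul,
        one_mul, mul_one, ← sub_tmul]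
    rw [h]
    exact comm_mem _ _
  exact hle hw

lemma dcomm_tmul {u : A} (hu : u ∈ (commS ⊤ (commS ⊤ ⊤) : Submodule ℂ A)) (e : ExtAlg k) :
    u ⊗ₜ[ℂ] e ∈ (commS ⊤ (commS ⊤ ⊤) : Submodule ℂ (A ⊗[ℂ] ExtAlg k)) := by
  have hle : (commS ⊤ (commS ⊤ ⊤) : Submodule ℂ A) ≤ Submodule.comap
      ((TensorProduct.mk ℂ A (ExtAlg k)).flip e) (commS ⊤ (commS ⊤ ⊤)) := by
    refine Submodule.span_le.2 ?_
    rintro _ ⟨x, -, w, hw, rfl⟩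
    simp only [SetLike.mem_coe, Submodule.mem_comap, LinearMap.flip_apply,
      TensorProduct.mk_apply]
    have h : (x * w - w * x) ⊗ₜ[ℂ] e =
        (x ⊗ₜ[ℂ] (1 : ExtAlg k)) * (w ⊗ₜ[ℂ] e) - (w ⊗ₜ[ℂ] e) * (x ⊗ₜ[ℂ] (1 : ExtAlg k)) := by
      rw [Algebra.TensorProduct.tmul_mul_tmul, Algebra.TensorProduct.tmul_mul_tmul,
        one_mul, mul_one, ← sub_tmul]
    rw [h]
    exact dcomm_mem _ (comm_tmul hw e)
  exact hle hu

lemma S2_core {g e : ExtAlg k} (hge : e * g = -(g * e)) (x y z : A) :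
    (x * (y * z - z * y)) ⊗ₜ[ℂ] (g * e)
      ∈ (commS ⊤ (commS ⊤ ⊤) : Submodule ℂ (A ⊗[ℂ] ExtAlg k)) := by
  set w := y * z - z * y with hw
  have h1 : (x * w - w * x) ⊗ₜ[ℂ] (g * e) ∈
      (commS ⊤ (commS ⊤ ⊤) : Submodule ℂ (A ⊗[ℂ] ExtAlg k)) :=
    dcomm_tmul (dcomm_mem x (comm_mem y z)) _
  have h2 : (x * w + w * x) ⊗ₜ[ℂ] (g * e) ∈
      (commS ⊤ (commS ⊤ ⊤) : Submodule ℂ (A ⊗[ℂ] ExtAlg k)) := by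
    have key : (x * w + w * x) ⊗ₜ[ℂ] (g * e) =
        (x ⊗ₜ[ℂ] g) * (w ⊗ₜ[ℂ] e) - (w ⊗ₜ[ℂ] e) * (x ⊗ₜ[ℂ] g) := by
      rw [Algebra.TensorProduct.tmul_mul_tmul, Algebra.TensorProduct.tmul_mul_tmul, hge,
        TensorProduct.tmul_neg, sub_neg_eq_add, ← add_tmul]
    rw [key]
    exact dcomm_mem _ (comm_tmul (comm_mem y z) e)
  have key2 : (x * w) ⊗ₜ[ℂ] (g * e) = ((2 : ℂ)⁻¹) •
      ((x * w + w * x) ⊗ₜ[ℂ] (g * e) + (x * w - w * x) ⊗ₜ[ℂ] (g * e)) := by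
    rw [← add_tmul]
    have h3 : (x * w + w * x) + (x * w - w * x) = x * w + x * w := by abel
    rw [h3, add_tmul, ← two_smul ℂ ((x * w) ⊗ₜ[ℂ] (g * e)), smul_smul]
    norm_num
  rw [key2]
  exact Submodule.smul_mem _ _ (add_mem h2 h1)

lemma S3_core {g e h : ExtAlg k} (hhe : h * e = -(e * h)) (hcomm : (e * h) * g = g * (e * h))
    (x y : A) :
    (x * y - y * x) ⊗ₜ[ℂ] (g * (e * h))
      ∈ (commS ⊤ (commS ⊤ ⊤) : Submodule ℂ (A ⊗[ℂ] ExtAlg k)) := by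
  set W := (y ⊗ₜ[ℂ] e) * ((1 : A) ⊗ₜ[ℂ] h) - ((1 : A) ⊗ₜ[ℂ] h) * (y ⊗ₜ[ℂ] e) with hWdef
  have hW : W = y ⊗ₜ[ℂ] (e * h) + y ⊗ₜ[ℂ] (e * h) := by
    rw [hWdef, Algebra.TensorProduct.tmul_mul_tmul, Algebra.TensorProduct.tmul_mul_tmul,
      one_mul, mul_one, hhe, TensorProduct.tmul_neg, sub_neg_eq_add]
  have hWmem : W ∈ (commS ⊤ ⊤ : Submodule ℂ (A ⊗[ℂ] ExtAlg k)) := comm_mem _ _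
  have hbig : (x ⊗ₜ[ℂ] g) * W - W * (x ⊗ₜ[ℂ] g) =
      (2 : ℂ) • ((x * y - y * x) ⊗ₜ[ℂ] (g * (e * h))) := by
    rw [hW, mul_add, add_mul, Algebra.TensorProduct.tmul_mul_tmul,
      Algebra.TensorProduct.tmul_mul_tmul, hcomm, two_smul, sub_tmul]
    abel
  have hmem : (x ⊗ₜ[ℂ] g) * W - W * (x ⊗ₜ[ℂ] g) ∈
      (commS ⊤ (commS ⊤ ⊤) : Submodule ℂ (A ⊗[ℂ] ExtAlg k)) := dcomm_mem _ hWmem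
  rw [hbig] at hmem
  have : (x * y - y * x) ⊗ₜ[ℂ] (g * (e * h)) =
      ((2 : ℂ)⁻¹) • ((2 : ℂ) • ((x * y - y * x) ⊗ₜ[ℂ] (g * (e * h)))) := by
    rw [smul_smul]; norm_num
  rw [this]
  exact Submodule.smul_mem _ _ hmem

end TenLemmas

section Le
variable {A : Type*} [Ring A] [Algebra ℂ A] {k : ℕ}

lemma S1_le {F : Submodule ℂ (ExtAlg k)} :
    tenS (commS (⊤ : Submodule ℂ A) (commS ⊤ ⊤)) F ≤ commS ⊤ (commS ⊤ ⊤) := by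
  refine Submodule.span_le.2 ?_
  rintro _ ⟨u, hu, f, -, rfl⟩
  exact dcomm_tmul hu f

lemma S2_le : tenS ((⊤ : Submodule ℂ A) * commS ⊤ ⊤) (EevenGe2 k)
    ≤ commS ⊤ (commS ⊤ ⊤) := by
  refine Submodule.span_le.2 ?_
  rintro _ ⟨u, hu, f, hf, rfl⟩
  simp only [SetLike.mem_coe]
  have hred : EevenGe2 k ≤ Submodule.comap (TensorProduct.mk ℂ A (ExtAlg k) u)
      (commS ⊤ (commS ⊤ ⊤)) := by
    refine iSup₂_le fun i hi => ?_
    obtain ⟨hieven, hige⟩ := hi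
    obtain ⟨n, rfl⟩ : ∃ n, i = n + 1 := ⟨i - 1, by omega⟩
    intro f hf
    have hf' : f ∈ LinearMap.range (ExteriorAlgebra.ι ℂ : (Fin k → ℂ) →ₗ[ℂ] ExtAlg k) *
        (LinearMap.range (ExteriorAlgebra.ι ℂ : (Fin k → ℂ) →ₗ[ℂ] ExtAlg k) ^ n) := by
      have := hf
      unfold Egrade at this
      rwa [pow_succ'] at this
    simp only [Submodule.mem_comap, TensorProduct.mk_apply]
    refine Submodule.mul_induction_on hf' (fun g hg e' he' => ?_) (fun f1 f2 h1 h2 => ?_)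
    · have hg1 : g ∈ Egrade k 1 := by unfold Egrade; rwa [pow_one]
      have he'' : e' ∈ Egrade k n := he'
      have hn : Odd n := by
        rw [Nat.even_add_one] at hieven
        rw [Nat.odd_iff]
        rcases Nat.even_or_odd n with h | h
        · exact absurd h hieven
        · exact Nat.odd_iff.1 h
      have hge : e' * g = -(g * e') := comm_odd he'' hg1 (by simpa using hn)
      have hured : (⊤ : Submodule ℂ A) * commS ⊤ ⊤ ≤ Submodule.comap
          ((TensorProduct.mk ℂ A (ExtAlg k)).flip (g * e')) (commS ⊤ (commS ⊤ ⊤)) := by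
        intro u' hu'
        refine Submodule.mul_induction_on hu' (fun x _ w hw => ?_) (fun a b ha hb => add_mem ha hb)
        have hwred : (commS ⊤ ⊤ : Submodule ℂ A) ≤ Submodule.comap
            (((TensorProduct.mk ℂ A (ExtAlg k)).flip (g * e')).comp (LinearMap.mulLeft ℂ x))
            (commS ⊤ (commS ⊤ ⊤)) := by
          refine Submodule.span_le.2 ?_
          rintro _ ⟨y, -, z, -, rfl⟩
          simp only [SetLike.mem_coe, Submodule.mem_comap, LinearMap.comp_apply,
            LinearMap.mulLeft_apply, LinearMap.flip_apply, TensorProduct.mk_apply]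
          exact S2_core hge x y z
        have := hwred hw
        simpa only [Submodule.mem_comap, LinearMap.comp_apply, LinearMap.mulLeft_apply,
          LinearMap.flip_apply, TensorProduct.mk_apply] using this
      have := hured hu
      simpa only [Submodule.mem_comap, LinearMap.flip_apply, TensorProduct.mk_apply] using this
    · rw [TensorProduct.tmul_add]
      exact add_mem h1 h2
  exact hred hf

lemma S3_le : tenS (commS (⊤ : Submodule ℂ A) ⊤) (EoddGe3 k)
    ≤ commS ⊤ (commS ⊤ ⊤) := by
  refine Submodule.span_le.2 ?_
  rintro _ ⟨u, hu, f, hf, rfl⟩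
  simp only [SetLike.mem_coe]
  have hred : EoddGe3 k ≤ Submodule.comap (TensorProduct.mk ℂ A (ExtAlg k) u)
      (commS ⊤ (commS ⊤ ⊤)) := by
    refine iSup₂_le fun i hi => ?_
    obtain ⟨hiodd, hige⟩ := hi
    obtain ⟨n, rfl⟩ : ∃ n, i = n + 1 + 1 := ⟨i - 2, by omega⟩
    intro f hf
    have hf' : f ∈ LinearMap.range (ExteriorAlgebra.ι ℂ : (Fin k → ℂ) →ₗ[ℂ] ExtAlg k) *
        (LinearMap.range (ExteriorAlgebra.ι ℂ : (Fin k → ℂ) →ₗ[ℂ] ExtAlg k) ^ (n + 1)) := by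
      have := hf
      unfold Egrade at this
      rwa [pow_succ'] at this
    simp only [Submodule.mem_comap, TensorProduct.mk_apply]
    refine Submodule.mul_induction_on hf' (fun g hg y hy => ?_) (fun f1 f2 h1 h2 => ?_)
    · -- g ∈ P, y ∈ P^(n+1); decompose y = e * h
      have hy' : y ∈ LinearMap.range (ExteriorAlgebra.ι ℂ : (Fin k → ℂ) →ₗ[ℂ] ExtAlg k) *
          (LinearMap.range (ExteriorAlgebra.ι ℂ : (Fin k → ℂ) →ₗ[ℂ] ExtAlg k) ^ n) := by
        rw [← pow_succ']
        exact hy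
      refine Submodule.mul_induction_on hy' (fun e he h hh => ?_) (fun y1 y2 hy1 hy2 => ?_)
      · have hg1 : g ∈ Egrade k 1 := by unfold Egrade; rwa [pow_one]
        have he1 : e ∈ Egrade k 1 := by unfold Egrade; rwa [pow_one]
        have hhn : h ∈ Egrade k n := hh
        have hn : Odd n := by
          rw [Nat.odd_iff] at hiodd ⊢
          omega
        have hhe : h * e = -(e * h) := comm_odd hhn he1 (by simpa using hn)
        have heh : e * h ∈ Egrade k (1 + n) := by
          unfold Egrade
          rw [pow_add, pow_one]
          exact Submodule.mul_mem_mul he hh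
        have hcomm : (e * h) * g = g * (e * h) := by
          refine comm_even heh hg1 ?_
          rw [Nat.even_mul]
          left
          rw [Nat.add_comm]
          exact hn.add_one
        have hured : (commS (⊤ : Submodule ℂ A) ⊤) ≤ Submodule.comap
            ((TensorProduct.mk ℂ A (ExtAlg k)).flip (g * (e * h))) (commS ⊤ (commS ⊤ ⊤)) := by
          refine Submodule.span_le.2 ?_
          rintro _ ⟨x, -, y', -, rfl⟩
          simp only [SetLike.mem_coe, Submodule.mem_comap, LinearMap.flip_apply,
            TensorProduct.mk_apply]
          exact S3_core hhe hcomm x y'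
        have := hured hu
        simpa only [Submodule.mem_comap, LinearMap.flip_apply, TensorProduct.mk_apply,
          mul_assoc] using this
      · rw [mul_add, TensorProduct.tmul_add]
        exact add_mem hy1 hy2
    · rw [TensorProduct.tmul_add]
      exact add_mem h1 h2
  exact hred hf

end Le

section Red
variable {A : Type*} [Ring A] [Algebra ℂ A] {k : ℕ}

lemma reduce_tmul {M : Type*} [AddCommGroup M] [Module ℂ M]
    (Φ : (A ⊗[ℂ] ExtAlg k) →ₗ[ℂ] M) (S : Submodule ℂ M)
    (h : ∀ (a : A) (i : ℕ) (e : ExtAlg k), e ∈ Egrade k i → Φ (a ⊗ₜ[ℂ] e) ∈ S) :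
    ∀ x, Φ x ∈ S := by
  intro x
  have htop : (⊤ : Submodule ℂ (A ⊗[ℂ] ExtAlg k)) ≤ S.comap Φ := by
    rw [← TensorProduct.span_tmul_eq_top ℂ]
    refine Submodule.span_le.2 ?_
    rintro _ ⟨a, e, rfl⟩
    simp only [SetLike.mem_coe, Submodule.mem_comap]
    induction e using DirectSum.Decomposition.inductionOn (fun i : ℕ => ⋀[ℂ]^i (Fin k → ℂ)) with
    | zero => rw [TensorProduct.tmul_zero, map_zero]; exact Submodule.zero_mem S
    | homogeneous m =>
        exact h a _ (m : ExtAlg k) m.2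
    | add m m' hm hm' =>
        rw [TensorProduct.tmul_add, map_add]
        exact add_mem hm hm'
  exact htop trivial

/-- membership of a homogeneous tensor in the RHS -/
lemma RHS_mem {m : ℕ} {w : A} {p : ExtAlg k} (hp : p ∈ Egrade k m)
    (h1 : m ≤ 1 → w ∈ (commS ⊤ (commS ⊤ ⊤) : Submodule ℂ A))
    (h2 : 2 ≤ m → Even m → w ∈ ((⊤ : Submodule ℂ A) * commS ⊤ ⊤))
    (h3 : 3 ≤ m → Odd m → w ∈ (commS (⊤ : Submodule ℂ A) ⊤)) :
    w ⊗ₜ[ℂ] p ∈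
      tenS (commS (⊤ : Submodule ℂ A) (commS ⊤ ⊤)) (Egrade k 0 ⊔ Egrade k 1)
      ⊔ tenS ((⊤ : Submodule ℂ A) * commS ⊤ ⊤) (EevenGe2 k)
      ⊔ tenS (commS (⊤ : Submodule ℂ A) ⊤) (EoddGe3 k) := by
  rcases Nat.even_or_odd m with hm | hm
  · rcases Nat.lt_or_ge m 2 with h | h
    · have hm0 : m = 0 := by
        rw [Nat.even_iff] at hm; omega
      subst hm0
      refine Submodule.mem_sup_left (Submodule.mem_sup_left ?_)
      exact Submodule.subset_span ⟨w, h1 (by omega), p, Submodule.mem_sup_left hp, rfl⟩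
    · refine Submodule.mem_sup_left (Submodule.mem_sup_right ?_)
      refine Submodule.subset_span ⟨w, h2 h hm, p, ?_, rfl⟩
      exact le_iSup₂ (f := fun i (_ : i ∈ {i : ℕ | Even i ∧ 2 ≤ i}) => Egrade k i) m ⟨hm, h⟩ hp
  · rcases Nat.lt_or_ge m 2 with h | h
    · have hm1 : m = 1 := by
        rw [Nat.odd_iff] at hm; omega
      subst hm1
      refine Submodule.mem_sup_left (Submodule.mem_sup_left ?_)
      exact Submodule.subset_span ⟨w, h1 (by omega), p, Submodule.mem_sup_right hp, rfl⟩
    · have h3' : 3 ≤ m := by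
        rw [Nat.odd_iff] at hm; omega
      refine Submodule.mem_sup_right ?_
      refine Submodule.subset_span ⟨w, h3 h3' hm, p, ?_, rfl⟩
      exact le_iSup₂ (f := fun i (_ : i ∈ {i : ℕ | Odd i ∧ 3 ≤ i}) => Egrade k i) m ⟨hm, h3'⟩ hp

set_option maxHeartbeats 1000000 in
lemma core {i j l : ℕ} (a b c : A) {e f g : ExtAlg k}
    (he : e ∈ Egrade k i) (hf : f ∈ Egrade k j) (hg : g ∈ Egrade k l) :
    (a ⊗ₜ[ℂ] e) * ((b ⊗ₜ[ℂ] f) * (c ⊗ₜ[ℂ] g) - (c ⊗ₜ[ℂ] g) * (b ⊗ₜ[ℂ] f))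
      - ((b ⊗ₜ[ℂ] f) * (c ⊗ₜ[ℂ] g) - (c ⊗ₜ[ℂ] g) * (b ⊗ₜ[ℂ] f)) * (a ⊗ₜ[ℂ] e) ∈
      tenS (commS (⊤ : Submodule ℂ A) (commS ⊤ ⊤)) (Egrade k 0 ⊔ Egrade k 1)
      ⊔ tenS ((⊤ : Submodule ℂ A) * commS ⊤ ⊤) (EevenGe2 k)
      ⊔ tenS (commS (⊤ : Submodule ℂ A) ⊤) (EoddGe3 k) := by
  have hq : f * g ∈ Egrade k (j + l) := Egrade_mul hf hg
  have hp : e * (f * g) ∈ Egrade k (i + (j + l)) := Egrade_mul he hq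
  rcases Nat.even_or_odd (l * j) with hε | hε
  · have h1 : g * f = f * g := comm_even hg hf hε
    have hinner : (b ⊗ₜ[ℂ] f) * (c ⊗ₜ[ℂ] g) - (c ⊗ₜ[ℂ] g) * (b ⊗ₜ[ℂ] f)
        = (b * c - c * b) ⊗ₜ[ℂ] (f * g) := by
      rw [Algebra.TensorProduct.tmul_mul_tmul, Algebra.TensorProduct.tmul_mul_tmul, h1,
        ← sub_tmul]
    rcases Nat.even_or_odd ((j + l) * i) with hδ | hδ
    · have h2 : (f * g) * e = e * (f * g) := comm_even hq he hδ
      have hD : (a ⊗ₜ[ℂ] e) * ((b ⊗ₜ[ℂ] f) * (c ⊗ₜ[ℂ] g) - (c ⊗ₜ[ℂ] g) * (b ⊗ₜ[ℂ] f))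
          - ((b ⊗ₜ[ℂ] f) * (c ⊗ₜ[ℂ] g) - (c ⊗ₜ[ℂ] g) * (b ⊗ₜ[ℂ] f)) * (a ⊗ₜ[ℂ] e)
          = (a * (b * c - c * b) - (b * c - c * b) * a) ⊗ₜ[ℂ] (e * (f * g)) := by
        rw [hinner, Algebra.TensorProduct.tmul_mul_tmul, Algebra.TensorProduct.tmul_mul_tmul,
          h2, ← sub_tmul]
      rw [hD]
      refine RHS_mem hp (fun _ => dcomm_mem a (comm_mem b c))
        (fun _ _ => commS_le_ACA (comm_mem a (b * c - c * b)))
        (fun _ _ => comm_mem a (b * c - c * b))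
    · have h2 : (f * g) * e = -(e * (f * g)) := comm_odd hq he hδ
      have hD : (a ⊗ₜ[ℂ] e) * ((b ⊗ₜ[ℂ] f) * (c ⊗ₜ[ℂ] g) - (c ⊗ₜ[ℂ] g) * (b ⊗ₜ[ℂ] f))
          - ((b ⊗ₜ[ℂ] f) * (c ⊗ₜ[ℂ] g) - (c ⊗ₜ[ℂ] g) * (b ⊗ₜ[ℂ] f)) * (a ⊗ₜ[ℂ] e)
          = (a * (b * c - c * b) + (b * c - c * b) * a) ⊗ₜ[ℂ] (e * (f * g)) := by
        rw [hinner, Algebra.TensorProduct.tmul_mul_tmul, Algebra.TensorProduct.tmul_mul_tmul,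
          h2, TensorProduct.tmul_neg, sub_neg_eq_add, ← add_tmul]
      rw [hD]
      obtain ⟨hjl, hi⟩ := Nat.odd_mul.1 hδ
      have hme : (i + (j + l)) % 2 = 0 := by
        rw [Nat.odd_iff] at hjl hi; omega
      have hige1 : 1 ≤ i := hi.pos
      have hjlge1 : 1 ≤ j + l := hjl.pos
      refine RHS_mem hp ?_ ?_ ?_
      · intro hle; omega
      · intro _ _; exact add_mem (mul_comm_mem_ACA a b c) (comm_mul_mem_ACA a b c)
      · intro _ hodd; rw [Nat.odd_iff] at hodd; omega
  · obtain ⟨hl, hj⟩ := Nat.odd_mul.1 hε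
    have h1 : g * f = -(f * g) := comm_odd hg hf hε
    have hinner : (b ⊗ₜ[ℂ] f) * (c ⊗ₜ[ℂ] g) - (c ⊗ₜ[ℂ] g) * (b ⊗ₜ[ℂ] f)
        = (b * c + c * b) ⊗ₜ[ℂ] (f * g) := by
      rw [Algebra.TensorProduct.tmul_mul_tmul, Algebra.TensorProduct.tmul_mul_tmul, h1,
        TensorProduct.tmul_neg, sub_neg_eq_add, ← add_tmul]
    have hδ : Even ((j + l) * i) := Nat.even_mul.2 (Or.inl (hj.add_odd hl))
    have h2 : (f * g) * e = e * (f * g) := comm_even hq he hδ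
    have hD : (a ⊗ₜ[ℂ] e) * ((b ⊗ₜ[ℂ] f) * (c ⊗ₜ[ℂ] g) - (c ⊗ₜ[ℂ] g) * (b ⊗ₜ[ℂ] f))
        - ((b ⊗ₜ[ℂ] f) * (c ⊗ₜ[ℂ] g) - (c ⊗ₜ[ℂ] g) * (b ⊗ₜ[ℂ] f)) * (a ⊗ₜ[ℂ] e)
        = (a * (b * c + c * b) - (b * c + c * b) * a) ⊗ₜ[ℂ] (e * (f * g)) := by
      rw [hinner, Algebra.TensorProduct.tmul_mul_tmul, Algebra.TensorProduct.tmul_mul_tmul,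
        h2, ← sub_tmul]
    rw [hD]
    have hw : a * (b * c + c * b) - (b * c + c * b) * a
        ∈ (commS (⊤ : Submodule ℂ A) ⊤) := by
      have hsplit : a * (b * c + c * b) - (b * c + c * b) * a
          = (a * (b * c) - (b * c) * a) + (a * (c * b) - (c * b) * a) := by noncomm_ring
      rw [hsplit]
      exact add_mem (comm_mem a (b * c)) (comm_mem a (c * b))
    have hjge1 : 1 ≤ j := hj.pos
    have hlge1 : 1 ≤ l := hl.pos
    refine RHS_mem hp ?_ ?_ ?_
    · intro hle; omega
    · intro _ _; exact commS_le_ACA hw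
    · intro _ _; exact hw
end Red

section Main
variable {A : Type*} [Ring A] [Algebra ℂ A] {k : ℕ}

set_option maxHeartbeats 1000000 in
lemma LHS_le : (commS ⊤ (commS ⊤ ⊤) : Submodule ℂ (A ⊗[ℂ] ExtAlg k)) ≤
      tenS (commS (⊤ : Submodule ℂ A) (commS ⊤ ⊤)) (Egrade k 0 ⊔ Egrade k 1)
      ⊔ tenS ((⊤ : Submodule ℂ A) * commS ⊤ ⊤) (EevenGe2 k)
      ⊔ tenS (commS (⊤ : Submodule ℂ A) ⊤) (EoddGe3 k) := by
  refine Submodule.span_le.2 ?_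
  rintro _ ⟨x, -, w, hw, rfl⟩
  simp only [SetLike.mem_coe]
  have hwred : (commS ⊤ ⊤ : Submodule ℂ (A ⊗[ℂ] ExtAlg k)) ≤ Submodule.comap
      (LinearMap.mulLeft ℂ x - LinearMap.mulRight ℂ x)
      (tenS (commS (⊤ : Submodule ℂ A) (commS ⊤ ⊤)) (Egrade k 0 ⊔ Egrade k 1)
        ⊔ tenS ((⊤ : Submodule ℂ A) * commS ⊤ ⊤) (EevenGe2 k)
        ⊔ tenS (commS (⊤ : Submodule ℂ A) ⊤) (EoddGe3 k)) := by
    refine Submodule.span_le.2 ?_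
    rintro _ ⟨y, -, z, -, rfl⟩
    simp only [SetLike.mem_coe, Submodule.mem_comap, LinearMap.sub_apply,
      LinearMap.mulLeft_apply, LinearMap.mulRight_apply]
    have hx := reduce_tmul (A := A) (k := k)
        (LinearMap.mulRight ℂ (y * z - z * y) - LinearMap.mulLeft ℂ (y * z - z * y))
        (tenS (commS (⊤ : Submodule ℂ A) (commS ⊤ ⊤)) (Egrade k 0 ⊔ Egrade k 1)
          ⊔ tenS ((⊤ : Submodule ℂ A) * commS ⊤ ⊤) (EevenGe2 k)
          ⊔ tenS (commS (⊤ : Submodule ℂ A) ⊤) (EoddGe3 k)) ?hx x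
    · simpa only [LinearMap.sub_apply, LinearMap.mulRight_apply, LinearMap.mulLeft_apply]
        using hx
    case hx =>
      intro a i e he
      simp only [LinearMap.sub_apply, LinearMap.mulRight_apply, LinearMap.mulLeft_apply]
      have hy := reduce_tmul (A := A) (k := k)
          ((LinearMap.mulLeft ℂ (a ⊗ₜ[ℂ] e) - LinearMap.mulRight ℂ (a ⊗ₜ[ℂ] e)).comp
            (LinearMap.mulRight ℂ z - LinearMap.mulLeft ℂ z))
          (tenS (commS (⊤ : Submodule ℂ A) (commS ⊤ ⊤)) (Egrade k 0 ⊔ Egrade k 1)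
            ⊔ tenS ((⊤ : Submodule ℂ A) * commS ⊤ ⊤) (EevenGe2 k)
            ⊔ tenS (commS (⊤ : Submodule ℂ A) ⊤) (EoddGe3 k)) ?hy y
      · simpa only [LinearMap.comp_apply, LinearMap.sub_apply, LinearMap.mulLeft_apply,
          LinearMap.mulRight_apply] using hy
      case hy =>
        intro b j f hf
        simp only [LinearMap.comp_apply, LinearMap.sub_apply, LinearMap.mulLeft_apply,
          LinearMap.mulRight_apply]
        have hz := reduce_tmul (A := A) (k := k)
            ((LinearMap.mulLeft ℂ (a ⊗ₜ[ℂ] e) - LinearMap.mulRight ℂ (a ⊗ₜ[ℂ] e)).comp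
              (LinearMap.mulLeft ℂ (b ⊗ₜ[ℂ] f) - LinearMap.mulRight ℂ (b ⊗ₜ[ℂ] f)))
            (tenS (commS (⊤ : Submodule ℂ A) (commS ⊤ ⊤)) (Egrade k 0 ⊔ Egrade k 1)
              ⊔ tenS ((⊤ : Submodule ℂ A) * commS ⊤ ⊤) (EevenGe2 k)
              ⊔ tenS (commS (⊤ : Submodule ℂ A) ⊤) (EoddGe3 k)) ?hz z
        · simpa only [LinearMap.comp_apply, LinearMap.sub_apply, LinearMap.mulLeft_apply,
            LinearMap.mulRight_apply] using hz
        case hz =>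
          intro c l g hg
          simp only [LinearMap.comp_apply, LinearMap.sub_apply, LinearMap.mulLeft_apply,
            LinearMap.mulRight_apply]
          exact core a b c he hf hg
  have := hwred hw
  simpa only [Submodule.mem_comap, LinearMap.sub_apply, LinearMap.mulLeft_apply,
    LinearMap.mulRight_apply] using this

end Main

/-- with `B = A ⊗ E`,
`[B,[B,B]] = [A,[A,A]] ⊗ (E^0 ⊕ E^1) + A[A,A] ⊗ E_+^{≥2} + [A,A] ⊗ E_−^{≥3}`,
and the three summands intersect pairwise trivially. -/
theorem stmt_15 (A : Type*) [Ring A] [Algebra ℂ A] (k : ℕ) :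
    letI S₁ := tenS (commS (⊤ : Submodule ℂ A) (commS ⊤ ⊤)) (Egrade k 0 ⊔ Egrade k 1)
    letI S₂ := tenS ((⊤ : Submodule ℂ A) * commS ⊤ ⊤) (EevenGe2 k)
    letI S₃ := tenS (commS (⊤ : Submodule ℂ A) ⊤) (EoddGe3 k)
    commS (⊤ : Submodule ℂ (A ⊗[ℂ] ExtAlg k)) (commS ⊤ ⊤) = S₁ + S₂ + S₃
      ∧ S₁ ⊓ S₂ = ⊥ ∧ S₁ ⊓ S₃ = ⊥ ∧ S₂ ⊓ S₃ = ⊥ := by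
  have hfix01 : ∀ x ∈ (Egrade k 0 ⊔ Egrade k 1), projS k {0, 1} x = x := by
    intro x hx
    rcases Submodule.mem_sup.1 hx with ⟨y, hy, z, hz, rfl⟩
    rw [map_add, projS_apply_of_mem (by simp : (0 : ℕ) ∈ ({0, 1} : Set ℕ)) hy,
      projS_apply_of_mem (by simp : (1 : ℕ) ∈ ({0, 1} : Set ℕ)) hz]
  have hzero2 : ∀ x ∈ EevenGe2 k, projS k {0, 1} x = 0 := by
    intro x hx
    unfold EevenGe2 at hx
    refine projS_eq_zero_on_biSup (fun i hi => ?_) x hx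
    obtain ⟨h1, h2⟩ := hi
    simp only [Set.mem_insert_iff, Set.mem_singleton_iff]
    omega
  have hzero3 : ∀ x ∈ EoddGe3 k, projS k {0, 1} x = 0 := by
    intro x hx
    unfold EoddGe3 at hx
    refine projS_eq_zero_on_biSup (fun i hi => ?_) x hx
    obtain ⟨h1, h2⟩ := hi
    simp only [Set.mem_insert_iff, Set.mem_singleton_iff]
    omega
  have hfix2 : ∀ x ∈ EevenGe2 k, projS k {i : ℕ | Even i} x = x := by
    intro x hx
    unfold EevenGe2 at hx
    exact projS_eq_self_on_biSup (fun i hi => hi.1) x hx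
  have hzero3' : ∀ x ∈ EoddGe3 k, projS k {i : ℕ | Even i} x = 0 := by
    intro x hx
    unfold EoddGe3 at hx
    refine projS_eq_zero_on_biSup (fun i hi => ?_) x hx
    have := hi.1
    rw [Nat.odd_iff] at this
    simp only [Set.mem_setOf_eq, Nat.even_iff]
    omega
  refine ⟨?_, ?_, ?_, ?_⟩
  · apply le_antisymm
    · rw [Submodule.add_eq_sup, Submodule.add_eq_sup]
      exact LHS_le
    · rw [Submodule.add_eq_sup, Submodule.add_eq_sup]
      exact sup_le (sup_le S1_le S2_le) S3_le
  · exact tenS_inf_eq_bot _ _ _ _ {0, 1} hfix01 hzero2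
  · exact tenS_inf_eq_bot _ _ _ _ {0, 1} hfix01 hzero3
  · exact tenS_inf_eq_bot _ _ _ _ {i : ℕ | Even i} hfix2 hzero3'
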